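/- Let X be a finite set, M a finite group, and U : X × X → M a map with U_{y,x} = U_{x,y}^{-1} for all x,y (an M-assignment). Let P : X × X → ℝ be a matrix with nonnegative entries and spectral radius strictly less than 1, and define the lifted matrix P̃ indexed by X × M by P̃_{(x,m),(y,n)} = P_{x,y} if n = m·U_{x,y} and 0 otherwise. Then I − P and I − P̃ are invertible, and for every x, y ∈ X and every m₀ ∈ M: Σ_{m∈M} (I − P̃)^{-1}_{(x,m₀),(y,m)} = (I − P)^{-1}_{x,y}. -/

import Mathlib

open scoped BigOperators NNReal ENNReal

section AuxAlgebra

variable {n : Type*} [Fintype n] [DecidableEq n] {R : Type*} [CommRing R]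

/-- If `1 - a ^ k` is invertible then so is `1 - a` (for square matrices over a comm ring). -/
lemma aux_isUnit_of_pow (a : Matrix n n R) (k : ℕ) (h : IsUnit (1 - a ^ k)) :
    IsUnit (1 - a) := by
  have h2 : (1 : Matrix n n R) - a ^ k = (1 - a) * ∑ i ∈ Finset.range k, a ^ i := by
    rw [← neg_sub a 1, neg_mul, mul_geom_sum, neg_sub]
  rw [Matrix.isUnit_iff_isUnit_det] at h ⊢
  rw [h2, Matrix.det_mul] at h
  exact isUnit_of_mul_isUnit_left h

/-- Powers of an entrywise nonnegative matrix are entrywise nonnegative. -/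
lemma aux_nonneg_pow (P : Matrix n n ℝ) (hnn : ∀ x y, 0 ≤ P x y) (k : ℕ) (hk : 1 ≤ k) :
    ∀ x y, 0 ≤ (P ^ k) x y := by
  induction k with
  | zero => omega
  | succ k ih =>
    rcases Nat.eq_or_lt_of_le hk with h | h
    · simpa [← h] using hnn
    · intro x y
      rw [pow_succ, Matrix.mul_apply]
      exact Finset.sum_nonneg fun z _ => mul_nonneg (ih (by omega) x z) (hnn z y)

end AuxAlgebra

section AuxAnalytic

attribute [local instance] Matrix.linftyOpNormedRing Matrix.linftyOpNormedAlgebra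

variable {X : Type*} [Fintype X] [DecidableEq X] {M' : Type*} [Fintype M'] [DecidableEq M']

/-- The `L∞`-operator norm of a complexified real matrix equals that of the real matrix. -/
lemma aux_nnnorm_map (B : Matrix X X ℝ) : ‖B.map Complex.ofReal‖₊ = ‖B‖₊ := by
  rw [Matrix.linfty_opNNNorm_def, Matrix.linfty_opNNNorm_def]
  simp [Matrix.map_apply]

/-- Gelfand's formula: if all complex eigenvalues have modulus `< 1`, some power of the
matrix has `L∞`-operator norm `< 1`. -/
lemma aux_exists_pow_norm_lt [Nonempty X] (P : Matrix X X ℝ)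
    (hspec : ∀ μ ∈ spectrum ℂ (P.map Complex.ofReal), ‖μ‖ < 1) :
    ∃ k : ℕ, 1 ≤ k ∧ ‖P ^ k‖₊ < 1 := by
  haveI : CompleteSpace (Matrix X X ℂ) := FiniteDimensional.complete ℂ _
  set A : Matrix X X ℂ := P.map Complex.ofReal with hA
  have hrad : spectralRadius ℂ A < (1 : ℝ≥0) := by
    apply spectrum.spectralRadius_lt_of_forall_lt
    intro z hz
    have h := hspec z hz
    rw [← NNReal.coe_lt_coe, coe_nnnorm]
    exact h
  have htend := spectrum.pow_nnnorm_pow_one_div_tendsto_nhds_spectralRadius A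
  have hev : ∀ᶠ n : ℕ in Filter.atTop,
      (‖A ^ n‖₊ : ENNReal) ^ (1 / (n : ℝ)) < (1 : ℝ≥0) :=
    htend.eventually_lt_const hrad
  obtain ⟨k, hklt, hk1⟩ := (hev.and (Filter.eventually_ge_atTop 1)).exists
  refine ⟨k, hk1, ?_⟩
  have hAk : ‖A ^ k‖₊ < 1 := by
    by_contra hge
    push_neg at hge
    have : (1 : ENNReal) ≤ (‖A ^ k‖₊ : ENNReal) ^ (1 / (k : ℝ)) := by
      rw [← ENNReal.one_rpow (1 / (k : ℝ))]
      exact ENNReal.rpow_le_rpow (by exact_mod_cast hge) (by positivity)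
    exact absurd hklt (not_lt.mpr (le_trans (by norm_num) this))
  have hmap : A ^ k = (P ^ k).map Complex.ofReal := by
    exact (map_pow (Complex.ofRealHom.mapMatrix) P k).symm
  rw [hmap, aux_nnnorm_map] at hAk
  exact hAk

/-- If a nonnegative matrix power on the covering has fiberwise row sums given by the base
matrix power of small norm, then both `1 - P ^ k` and `1 - Q ^ k` are invertible. -/
lemma aux_isUnit_pair (P : Matrix X X ℝ) (Q : Matrix (X × M') (X × M') ℝ) (k : ℕ)
    (hPk : ‖P ^ k‖₊ < 1) (hPnn : ∀ x y, 0 ≤ (P ^ k) x y)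
    (hQnn : ∀ p q, 0 ≤ (Q ^ k) p q)
    (hrow : ∀ (p : X × M') (y : X), ∑ n : M', (Q ^ k) p (y, n) = (P ^ k) p.1 y) :
    IsUnit (1 - P ^ k) ∧ IsUnit (1 - Q ^ k) := by
  haveI : CompleteSpace (Matrix X X ℝ) := FiniteDimensional.complete ℝ _
  haveI : CompleteSpace (Matrix (X × M') (X × M') ℝ) := FiniteDimensional.complete ℝ _
  have hQk : ‖Q ^ k‖₊ ≤ ‖P ^ k‖₊ := by
    rw [Matrix.linfty_opNNNorm_def, Matrix.linfty_opNNNorm_def]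
    apply Finset.sup_le
    intro p _
    have heq : ∑ q : X × M', ‖(Q ^ k) p q‖₊ = ∑ y : X, ‖(P ^ k) p.1 y‖₊ := by
      apply NNReal.coe_injective
      push_cast [coe_nnnorm]
      rw [Fintype.sum_prod_type]
      calc ∑ y : X, ∑ n : M', ‖(Q ^ k) p (y, n)‖
          = ∑ y : X, ∑ n : M', (Q ^ k) p (y, n) := by
            refine Finset.sum_congr rfl fun y _ => Finset.sum_congr rfl fun n _ => ?_
            exact Real.norm_of_nonneg (hQnn _ _)
        _ = ∑ y : X, (P ^ k) p.1 y := by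
            refine Finset.sum_congr rfl fun y _ => hrow p y
        _ = ∑ y : X, ‖(P ^ k) p.1 y‖ := by
            refine Finset.sum_congr rfl fun y _ => (Real.norm_of_nonneg (hPnn _ _)).symm
    rw [heq]
    exact Finset.le_sup (f := fun x => ∑ y : X, ‖(P ^ k) x y‖₊) (Finset.mem_univ p.1)
  have hP : ‖P ^ k‖ < 1 := by rw [← coe_nnnorm]; exact_mod_cast hPk
  have hQ : ‖Q ^ k‖ < 1 := by
    rw [← coe_nnnorm]; exact_mod_cast lt_of_le_of_lt hQk hPk
  exact ⟨⟨Units.oneSub _ hP, rfl⟩, ⟨Units.oneSub _ hQ, rfl⟩⟩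

end AuxAnalytic

section AuxIntertwine

variable {X : Type*} [Fintype X] [DecidableEq X] {M : Type*} [Group M] [Fintype M] [DecidableEq M]

/-- The fiber-summation intertwiner: `Q * J = J * P`. -/
lemma aux_QJ (U : X → X → M) (P : Matrix X X ℝ) :
    (Matrix.of (fun p q : X × M => if q.2 = p.2 * U p.1 q.1 then P p.1 q.1 else 0)) *
      (Matrix.of fun (p : X × M) (y : X) => if p.1 = y then (1 : ℝ) else 0)
    = (Matrix.of fun (p : X × M) (y : X) => if p.1 = y then (1 : ℝ) else 0) * P := by
  ext ⟨x, m⟩ y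
  rw [Matrix.mul_apply, Matrix.mul_apply]
  simp [Fintype.sum_prod_type, ite_mul, mul_ite]

end AuxIntertwine

/-- Summing the Green function of a Galois covering (defined by an `M`-assignment `U`)
over a fiber gives the Green function of the base graph:
`Σ_m (I - P̃)⁻¹_{(x,m₀),(y,m)} = (I - P)⁻¹_{x,y}`. -/
theorem covering_green_function_fiber_sum
    {X : Type*} [Fintype X] [DecidableEq X]
    {M : Type*} [Group M] [Fintype M] [DecidableEq M]
    (U : X → X → M) (hU : ∀ x y, U y x = (U x y)⁻¹)
    (P : Matrix X X ℝ) (hnn : ∀ x y, 0 ≤ P x y)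
    (hspec : ∀ μ ∈ spectrum ℂ (P.map Complex.ofReal), ‖μ‖ < 1) :
    IsUnit (1 - P) ∧
    IsUnit (1 - Matrix.of (fun p q : X × M =>
        if q.2 = p.2 * U p.1 q.1 then P p.1 q.1 else 0)) ∧
    ∀ (x y : X) (m₀ : M),
      (∑ m : M, (1 - Matrix.of (fun p q : X × M =>
          if q.2 = p.2 * U p.1 q.1 then P p.1 q.1 else 0))⁻¹ (x, m₀) (y, m))
        = (1 - P)⁻¹ x y := by
  classical
  set Q : Matrix (X × M) (X × M) ℝ :=
    Matrix.of (fun p q : X × M => if q.2 = p.2 * U p.1 q.1 then P p.1 q.1 else 0) with hQdef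
  set J : Matrix (X × M) X ℝ :=
    Matrix.of fun (p : X × M) (y : X) => if p.1 = y then (1 : ℝ) else 0 with hJdef
  have hQJ : Q * J = J * P := aux_QJ U P
  have hQJk : ∀ k : ℕ, Q ^ k * J = J * P ^ k := by
    intro k
    induction k with
    | zero => simp
    | succ k ih =>
      rw [pow_succ, pow_succ, Matrix.mul_assoc, hQJ, ← Matrix.mul_assoc, ih, Matrix.mul_assoc]
  rcases isEmpty_or_nonempty X with hX | hX
  · haveI : Subsingleton (Matrix X X ℝ) := ⟨fun a b => by ext x; exact isEmptyElim x⟩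
    haveI : Subsingleton (Matrix (X × M) (X × M) ℝ) :=
      ⟨fun a b => by ext p; exact isEmptyElim p.1⟩
    exact ⟨isUnit_of_subsingleton _, isUnit_of_subsingleton _, fun x => isEmptyElim x⟩
  · obtain ⟨k, hk1, hPk⟩ := aux_exists_pow_norm_lt P hspec
    have hPnn := aux_nonneg_pow P hnn k hk1
    have hQnn0 : ∀ p q, 0 ≤ Q p q := by
      intro p q
      rw [hQdef]
      dsimp only [Matrix.of_apply]
      split
      · exact hnn _ _
      · exact le_refl _
    have hQnn := aux_nonneg_pow Q hQnn0 k hk1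
    have hrow : ∀ (p : X × M) (y : X), ∑ n : M, (Q ^ k) p (y, n) = (P ^ k) p.1 y := by
      intro p y
      have h := congrFun (congrFun (hQJk k) p) y
      rw [Matrix.mul_apply, Matrix.mul_apply] at h
      simp only [hJdef, Matrix.of_apply, Fintype.sum_prod_type, ite_mul, mul_ite,
        mul_one, mul_zero, one_mul, zero_mul] at h
      rw [Finset.sum_comm] at h
      simpa using h
    obtain ⟨hPu, hQu⟩ := aux_isUnit_pair P Q k hPk hPnn hQnn hrow
    have hP1 : IsUnit (1 - P) := aux_isUnit_of_pow P k hPu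
    have hQ1 : IsUnit (1 - Q) := aux_isUnit_of_pow Q k hQu
    refine ⟨hP1, hQ1, ?_⟩
    have hdP : IsUnit (1 - P).det := (Matrix.isUnit_iff_isUnit_det _).mp hP1
    have hdQ : IsUnit (1 - Q).det := (Matrix.isUnit_iff_isUnit_det _).mp hQ1
    have h1 : (1 - Q) * J = J * (1 - P) := by
      rw [Matrix.sub_mul, Matrix.mul_sub, Matrix.one_mul, Matrix.mul_one, hQJ]
    have key : (1 - Q)⁻¹ * J = J * (1 - P)⁻¹ := by
      calc (1 - Q)⁻¹ * J
          = (1 - Q)⁻¹ * (J * (1 - P) * (1 - P)⁻¹) := by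
            rw [Matrix.mul_nonsing_inv_cancel_right _ _ hdP]
        _ = (1 - Q)⁻¹ * ((1 - Q) * J * (1 - P)⁻¹) := by rw [h1]
        _ = (1 - Q)⁻¹ * ((1 - Q) * (J * (1 - P)⁻¹)) := by rw [Matrix.mul_assoc]
        _ = J * (1 - P)⁻¹ := Matrix.nonsing_inv_mul_cancel_left _ _ hdQ
    intro x y m₀
    have h := congrFun (congrFun key (x, m₀)) y
    rw [Matrix.mul_apply, Matrix.mul_apply] at h
    simp only [hJdef, Matrix.of_apply, Fintype.sum_prod_type, ite_mul, mul_ite,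
      mul_one, mul_zero, one_mul, zero_mul] at h
    rw [Finset.sum_comm] at h
    simpa using h
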